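/- Let k be a field and let r = (r_{ij})_{0 ≤ i ≤ j ≤ n} be nonnegative integers satisfying the rank conditions (★), with e_i := r_{ii}. Then there exist linear maps φ_i : k^{e_{i−1}} → k^{e_i} (1 ≤ i ≤ n) such that rank(φ_j ∘ φ_{j−1} ∘ ⋯ ∘ φ_{i+1}) = r_{ij} for all 0 ≤ i < j ≤ n. That is, every collection of rank conditions satisfying (★) actually occurs, i.e. equality in all the rank conditions can be achieved simultaneously. -/

import Mathlib

open scoped BigOperators

/-- The composite `φ_{i+d} ∘ ⋯ ∘ φ_{i+1} : V_i → V_{i+d}` of `d` consecutive maps in a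
sequence of linear maps (indexed so that `φ i : V i → V (i+1)`); for `d = 0` it is the
identity. -/
def lcomp {k : Type*} [Field k] {V : ℕ → Type*} [∀ i, AddCommGroup (V i)]
    [∀ i, Module k (V i)] (φ : ∀ i, V i →ₗ[k] V (i + 1)) : ∀ i d : ℕ, V i →ₗ[k] V (i + d)
  | _, 0 => LinearMap.id
  | i, d + 1 => (φ (i + d)).comp (lcomp φ i d)

namespace RankCond

variable (n : ℕ) (r : ℕ → ℕ → ℕ)

/-- `r` extended by zero beyond column `n`. -/
def R (i j : ℕ) : ℕ := if j ≤ n then r i j else 0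

/-- The largest `j ≤ n` with `t < R i j` (the "right endpoint" of coordinate `t` at level `i`). -/
def bb (i t : ℕ) : ℕ := Nat.findGreatest (fun j => t < R n r i j) n

/-- The index map of the step `φ_{i+1}` on basis vectors. -/
def psi (i t : ℕ) : ℕ := R n r (i + 1) (bb n r i t + 1) + (t - R n r i (bb n r i t + 1))

/-- The index map of the composite `φ_{i+d} ∘ ⋯ ∘ φ_{i+1}` on basis vectors. -/
def iter (i : ℕ) : ℕ → ℕ → ℕ
  | 0, t => t
  | d + 1, t => psi n r (i + d) (iter i d t)

section Star

variable (hstar1 : ∀ i j : ℕ, i < j → j ≤ n → r i j ≤ r i (j - 1) ∧ r i j ≤ r (i + 1) j)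
variable (hstar2 : ∀ i j : ℕ, i + 1 < j → j ≤ n →
      r i (j - 1) + r (i + 1) j ≤ r (i + 1) (j - 1) + r i j)

include hstar1 in
lemma Rstep (i j : ℕ) (hij : i ≤ j) : R n r i (j + 1) ≤ R n r i j := by
  by_cases h : j + 1 ≤ n
  · have := (hstar1 i (j + 1) (by omega) h).1
    simp only [Nat.add_sub_cancel] at this
    simpa [R, h, Nat.le_of_succ_le h] using this
  · simp [R, h]

include hstar1 in
lemma Rant (i j j' : ℕ) (hij : i ≤ j) (hjj : j ≤ j') : R n r i j' ≤ R n r i j := by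
  induction j' with
  | zero =>
    obtain rfl : j = 0 := by omega
    exact le_rfl
  | succ m ih =>
    rcases Nat.lt_or_ge j (m + 1) with h | h
    · exact le_trans (Rstep n r hstar1 i m (by omega)) (ih (by omega))
    · obtain rfl : j = m + 1 := by omega
      exact le_rfl

include hstar1 in
lemma Rcol (i j : ℕ) (hij : i + 1 ≤ j) : R n r i j ≤ R n r (i + 1) j := by
  by_cases h : j ≤ n
  · simpa [R, h] using (hstar1 i j (by omega) h).2
  · simp [R, h]

include hstar1 hstar2 in
lemma Rconv (i b : ℕ) (hib : i + 1 ≤ b) (hbn : b ≤ n) :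
    R n r i b + R n r (i + 1) (b + 1) ≤ R n r (i + 1) b + R n r i (b + 1) := by
  by_cases h : b + 1 ≤ n
  · have := hstar2 i (b + 1) (by omega) h
    simp only [Nat.add_sub_cancel] at this
    simpa [R, h, hbn] using this
  · have h0 : R n r (i + 1) (b + 1) = 0 := by simp [R, h]
    have h1 : R n r i (b + 1) = 0 := by simp [R, h]
    rw [h0, h1]
    simpa using Rcol n r hstar1 i b hib

variable {n r}

lemma bb_le (i t : ℕ) : bb n r i t ≤ n := Nat.findGreatest_le n

lemma bb_ge {i t : ℕ} (hin : i ≤ n) (ht : t < r i i) : i ≤ bb n r i t :=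
  Nat.le_findGreatest hin (by simpa [R, hin] using ht)

lemma bb_spec {i t : ℕ} (hin : i ≤ n) (ht : t < r i i) : t < R n r i (bb n r i t) :=
  Nat.findGreatest_spec (P := fun j => t < R n r i j) hin (by simpa [R, hin] using ht)

lemma bb_succ (i t : ℕ) : R n r i (bb n r i t + 1) ≤ t := by
  by_cases h : bb n r i t + 1 ≤ n
  · exact Nat.le_of_not_lt (Nat.findGreatest_is_greatest (P := fun j => t < R n r i j)
      (k := bb n r i t + 1) (Nat.lt_succ_self _) h)
  · simp [R, h]

include hstar1 in
lemma bb_iff {i t : ℕ} (hin : i ≤ n) (ht : t < r i i) {j : ℕ} (hij : i ≤ j) (hjn : j ≤ n) :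
    t < R n r i j ↔ j ≤ bb n r i t := by
  constructor
  · intro h
    by_contra hb
    push_neg at hb
    exact absurd h (Nat.findGreatest_is_greatest (P := fun j => t < R n r i j) hb hjn)
  · intro h
    exact lt_of_lt_of_le (bb_spec hin ht) (Rant n r hstar1 i j _ hij h)

section Psi

variable {i t : ℕ} (hin : i + 1 ≤ n) (ht : t < r i (i + 1))

include hstar1 hin ht

lemma t_lt_diag : t < r i i := by
  have h1 : R n r i (i + 1) ≤ R n r i i := Rant n r hstar1 i i (i + 1) le_rfl (by omega)
  have h2 : R n r i (i + 1) = r i (i + 1) := by simp [R, hin]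
  have h3 : R n r i i = r i i := by simp [R]; intro h; omega
  omega

lemma bb_ge_succ : i + 1 ≤ bb n r i t := by
  rw [← bb_iff hstar1 (by omega) (t_lt_diag hstar1 hin ht) (by omega) hin]
  simpa [R, hin] using ht

include hstar2 in
lemma psi_ub : psi n r i t < R n r (i + 1) (bb n r i t) := by
  have hb1 := bb_ge_succ hstar1 hin ht
  have hb2 := bb_le (n := n) (r := r) i t
  have h1 : t < R n r i (bb n r i t) := bb_spec (by omega) (t_lt_diag hstar1 hin ht)
  have h2 := bb_succ (n := n) (r := r) i t
  have h3 := Rconv n r hstar1 hstar2 i (bb n r i t) hb1 hb2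
  unfold psi
  omega

include hstar2 in
lemma psi_iff {j : ℕ} (hij : i + 1 ≤ j) (hjn : j ≤ n) :
    psi n r i t < R n r (i + 1) j ↔ t < R n r i j := by
  have hb1 := bb_ge_succ hstar1 hin ht
  have hb2 := bb_le (n := n) (r := r) i t
  rw [bb_iff hstar1 (by omega) (t_lt_diag hstar1 hin ht) (by omega) hjn]
  constructor
  · intro h
    by_contra hb
    have h4 : R n r (i + 1) j ≤ R n r (i + 1) (bb n r i t + 1) :=
      Rant n r hstar1 (i + 1) (bb n r i t + 1) j (by omega) (by omega)
    have h5 : R n r (i + 1) (bb n r i t + 1) ≤ psi n r i t := Nat.le_add_right _ _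
    omega
  · intro h
    exact lt_of_lt_of_le (psi_ub hstar1 hstar2 hin ht)
      (Rant n r hstar1 (i + 1) j _ hij h)

include hstar2 in
lemma psi_bb : bb n r (i + 1) (psi n r i t) = bb n r i t := by
  have hb1 := bb_ge_succ hstar1 hin ht
  have hb2 := bb_le (n := n) (r := r) i t
  have hub := psi_ub hstar1 hstar2 hin ht
  apply le_antisymm
  · by_contra hb
    push_neg at hb
    have hP : psi n r i t < R n r (i + 1) (bb n r (i + 1) (psi n r i t)) :=
      Nat.findGreatest_spec (P := fun j => psi n r i t < R n r (i + 1) j)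
        (m := bb n r i t) hb2 hub
    have : R n r (i + 1) (bb n r (i + 1) (psi n r i t)) ≤ R n r (i + 1) (bb n r i t + 1) :=
      Rant n r hstar1 (i + 1) (bb n r i t + 1) _ (by omega) (by omega)
    have h5 : R n r (i + 1) (bb n r i t + 1) ≤ psi n r i t := Nat.le_add_right _ _
    omega
  · exact Nat.le_findGreatest hb2 hub

include hstar2 in
lemma psi_recon :
    R n r i (bb n r (i + 1) (psi n r i t) + 1)
      + (psi n r i t - R n r (i + 1) (bb n r (i + 1) (psi n r i t) + 1)) = t := by
  rw [psi_bb hstar1 hstar2 hin ht]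
  have h2 := bb_succ (n := n) (r := r) i t
  unfold psi
  omega

end Psi

include hstar1 hstar2 in
lemma psi_inj {i t t' : ℕ} (hin : i + 1 ≤ n) (ht : t < r i (i + 1)) (ht' : t' < r i (i + 1))
    (h : psi n r i t = psi n r i t') : t = t' := by
  have h1 := psi_recon hstar1 hstar2 hin ht
  have h2 := psi_recon hstar1 hstar2 hin ht'
  rw [h] at h1
  omega

include hstar1 hstar2 in
lemma iter_iff : ∀ d i t, i + d ≤ n → t < R n r i (i + d) →
    ∀ j, i + d ≤ j → j ≤ n → (iter n r i d t < R n r (i + d) j ↔ t < R n r i j) := by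
  intro d
  induction d with
  | zero => intro i t _ _ j _ _; rfl
  | succ d ih =>
    intro i t hdn ht j hj hjn
    have hle : t < R n r i (i + d) :=
      lt_of_lt_of_le ht (Rant n r hstar1 i (i + d) (i + d + 1) (by omega) (by omega))
    have hu : iter n r i d t < r (i + d) (i + d + 1) := by
      have := (ih i t (by omega) hle (i + d + 1) (by omega) (by omega)).2 ht
      simpa [R, show i + d + 1 ≤ n from hdn] using this
    have hpsi := psi_iff (i := i + d) (t := iter n r i d t) hstar1 hstar2 hdn hu
      (j := j) (by omega) hjn
    have hih := ih i t (by omega) hle j (by omega) hjn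
    show psi n r (i + d) (iter n r i d t) < R n r (i + d + 1) j ↔ _
    rw [hpsi, hih]

include hstar1 hstar2 in
lemma iter_lt {d i t : ℕ} (hdn : i + d ≤ n) (ht : t < R n r i (i + d)) :
    iter n r i d t < r (i + d) (i + d) := by
  have := (iter_iff hstar1 hstar2 d i t hdn ht (i + d) le_rfl hdn).2 ht
  simpa [R, hdn] using this

include hstar1 hstar2 in
lemma iter_inj : ∀ d i t t', i + d ≤ n → t < R n r i (i + d) → t' < R n r i (i + d) →
    iter n r i d t = iter n r i d t' → t = t' := by
  intro d
  induction d with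
  | zero => intro i t t' _ _ _ h; exact h
  | succ d ih =>
    intro i t t' hdn ht ht' h
    have hle : t < R n r i (i + d) :=
      lt_of_lt_of_le ht (Rant n r hstar1 i (i + d) (i + d + 1) (by omega) (by omega))
    have hle' : t' < R n r i (i + d) :=
      lt_of_lt_of_le ht' (Rant n r hstar1 i (i + d) (i + d + 1) (by omega) (by omega))
    have hu : iter n r i d t < r (i + d) (i + d + 1) := by
      have := (iter_iff hstar1 hstar2 d i t (by omega) hle (i + d + 1) (by omega) (by omega)).2 ht
      simpa [R, show i + d + 1 ≤ n from hdn] using this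
    have hu' : iter n r i d t' < r (i + d) (i + d + 1) := by
      have := (iter_iff hstar1 hstar2 d i t' (by omega) hle' (i + d + 1) (by omega) (by omega)).2 ht'
      simpa [R, show i + d + 1 ≤ n from hdn] using this
    exact ih i t t' (by omega) hle hle' (psi_inj hstar1 hstar2 hdn hu hu' h)

end Star

variable (k : Type*) [Field k]

/-- The matrix of the step map. -/
def M (i : ℕ) : Matrix (Fin (r (i + 1) (i + 1))) (Fin (r i i)) k :=
  fun s t => if (t : ℕ) < r i (i + 1) ∧ (s : ℕ) = psi n r i (t : ℕ) then 1 else 0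

/-- The step maps. -/
noncomputable def Phi (i : ℕ) : (Fin (r i i) → k) →ₗ[k] (Fin (r (i + 1) (i + 1)) → k) :=
  Matrix.toLin' (M n r k i)

variable {n r k}

lemma Phi_single_zero {i : ℕ} (t : Fin (r i i)) (h : ¬ ((t : ℕ) < r i (i + 1))) :
    Phi n r k i (Pi.single t 1) = 0 := by
  funext s
  simp [Phi, Matrix.toLin'_apply, Matrix.mulVec_single, M, h]

lemma Phi_single {i : ℕ} (t : Fin (r i i)) (h : (t : ℕ) < r i (i + 1))
    (hlt : psi n r i (t : ℕ) < r (i + 1) (i + 1)) :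
    Phi n r k i (Pi.single t 1)
      = Pi.single (⟨psi n r i (t : ℕ), hlt⟩ : Fin (r (i + 1) (i + 1))) 1 := by
  funext s
  simp only [Phi, Matrix.toLin'_apply, Matrix.mulVec_single_one, Matrix.col_apply, M, h, true_and, mul_one,
    Pi.single_apply]
  by_cases hs : (s : ℕ) = psi n r i (t : ℕ)
  · rw [if_pos hs, if_pos (Fin.ext hs)]
  · rw [if_neg hs, if_neg (fun hc => hs (by rw [hc]))]

section Main

variable (hstar1 : ∀ i j : ℕ, i < j → j ≤ n → r i j ≤ r i (j - 1) ∧ r i j ≤ r (i + 1) j)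
variable (hstar2 : ∀ i j : ℕ, i + 1 < j → j ≤ n →
      r i (j - 1) + r (i + 1) j ≤ r (i + 1) (j - 1) + r i j)

include hstar1 hstar2

lemma lcomp_single : ∀ (d i : ℕ) (t : Fin (r i i)) (hdn : i + d ≤ n)
    (ht : (t : ℕ) < R n r i (i + d)),
    lcomp (Phi n r k) i d (Pi.single t 1)
      = Pi.single (⟨iter n r i d (t : ℕ), iter_lt hstar1 hstar2 hdn ht⟩ :
          Fin (r (i + d) (i + d))) 1 := by
  intro d
  induction d with
  | zero =>
    intro i t hdn ht
    show Pi.single t 1 = _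
    congr 1
  | succ d ih =>
    intro i t hdn ht
    have hle : (t : ℕ) < R n r i (i + d) :=
      lt_of_lt_of_le ht (Rant n r hstar1 i (i + d) (i + d + 1) (by omega) (by omega))
    have hu : iter n r i d (t : ℕ) < r (i + d) (i + d + 1) := by
      have := (iter_iff hstar1 hstar2 d i (t : ℕ) (by omega) hle (i + d + 1)
        (by omega) (by omega)).2 ht
      simpa [R, show i + d + 1 ≤ n from hdn] using this
    have hlt : psi n r (i + d) (iter n r i d (t : ℕ)) < r (i + d + 1) (i + d + 1) := by
      have := iter_lt (d := d + 1) (i := i) (t := (t : ℕ)) hstar1 hstar2 hdn ht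
      exact this
    show Phi n r k (i + d) (lcomp (Phi n r k) i d (Pi.single t 1)) = _
    rw [ih i t (by omega) hle]
    exact Phi_single _ hu hlt

lemma lcomp_zero : ∀ (d i : ℕ) (t : Fin (r i i)), i + d ≤ n →
    ¬ ((t : ℕ) < R n r i (i + d)) → lcomp (Phi n r k) i d (Pi.single t 1) = 0 := by
  intro d
  induction d with
  | zero =>
    intro i t hdn ht
    refine absurd ?_ ht
    have hin : i ≤ n := by omega
    simpa [R, hin] using t.2
  | succ d ih =>
    intro i t hdn ht
    by_cases hm : (t : ℕ) < R n r i (i + d)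
    · have hu : ¬ (iter n r i d (t : ℕ) < r (i + d) (i + d + 1)) := by
        intro hc
        apply ht
        have := (iter_iff hstar1 hstar2 d i (t : ℕ) (by omega) hm (i + d + 1)
          (by omega) (by omega)).1 (by simpa [R, show i + d + 1 ≤ n from hdn] using hc)
        exact this
      show Phi n r k (i + d) (lcomp (Phi n r k) i d (Pi.single t 1)) = 0
      rw [lcomp_single hstar1 hstar2 d i t (by omega) hm]
      exact Phi_single_zero _ hu
    · show Phi n r k (i + d) (lcomp (Phi n r k) i d (Pi.single t 1)) = 0
      rw [ih i t (by omega) hm, map_zero]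

lemma rank_lcomp (i d : ℕ) (hdn : i + d ≤ n) :
    Module.finrank k (LinearMap.range (lcomp (Phi n r k) i d)) = r i (i + d) := by
  classical
  set f := lcomp (Phi n r k) i d with hf
  have hRm : R n r i (i + d) = r i (i + d) := by simp [R, hdn]
  have hmle : r i (i + d) ≤ r i i := by
    have h1 : R n r i (i + d) ≤ R n r i i := Rant n r hstar1 i i (i + d) le_rfl (by omega)
    have h3 : R n r i i = r i i := by simp [R]; omega
    omega
  -- the image vectors
  set g : Fin (r i (i + d)) → (Fin (r (i + d) (i + d)) → k) := fun u =>
    Pi.single (⟨iter n r i d (u : ℕ),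
      iter_lt hstar1 hstar2 hdn (by rw [hRm]; exact u.2)⟩ : Fin (r (i + d) (i + d))) 1
    with hg
  have hrange : LinearMap.range f
      = Submodule.span k (Set.range fun t : Fin (r i i) => f (Pi.single t 1)) := by
    have hcomp : (⇑f ∘ ⇑(Pi.basisFun k (Fin (r i i))))
        = fun t : Fin (r i i) => f (Pi.single t 1) := by
      funext t
      simp [Function.comp, Pi.basisFun_apply]
    rw [LinearMap.range_eq_map, ← (Pi.basisFun k (Fin (r i i))).span_eq, Submodule.map_span,
      ← Set.range_comp, hcomp]
  have hspan : Submodule.span k (Set.range fun t : Fin (r i i) => f (Pi.single t 1))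
      = Submodule.span k (Set.range g) := by
    apply le_antisymm
    · rw [Submodule.span_le]
      rintro x ⟨t, rfl⟩
      by_cases h : (t : ℕ) < r i (i + d)
      · have hsng := lcomp_single (k := k) hstar1 hstar2 d i t hdn (by rw [hRm]; exact h)
        show f (Pi.single t 1) ∈ _
        rw [hf, hsng]
        exact Submodule.subset_span ⟨⟨(t : ℕ), h⟩, rfl⟩
      · have hz := lcomp_zero (k := k) hstar1 hstar2 d i t hdn (by rw [hRm]; exact h)
        show f (Pi.single t 1) ∈ _
        rw [hf, hz]
        exact Submodule.zero_mem _
    · rw [Submodule.span_le]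
      rintro x ⟨u, rfl⟩
      have hult : (u : ℕ) < r i i := lt_of_lt_of_le u.2 hmle
      have hsng := lcomp_single (k := k) hstar1 hstar2 d i (⟨(u : ℕ), hult⟩ : Fin (r i i)) hdn
        (by rw [hRm]; exact u.2)
      refine Submodule.subset_span ⟨⟨(u : ℕ), hult⟩, ?_⟩
      show f (Pi.single _ 1) = g u
      rw [hf, hsng]
  have hinj : Function.Injective (fun u : Fin (r i (i + d)) =>
      (⟨iter n r i d (u : ℕ), iter_lt hstar1 hstar2 hdn
        (by rw [hRm]; exact u.2)⟩ : Fin (r (i + d) (i + d)))) := by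
    intro u v huv
    have : iter n r i d (u : ℕ) = iter n r i d (v : ℕ) := congrArg Fin.val huv
    exact Fin.ext (iter_inj hstar1 hstar2 d i (u : ℕ) (v : ℕ) hdn
      (by rw [hRm]; exact u.2) (by rw [hRm]; exact v.2) this)
  have hli : LinearIndependent k g := by
    have hb := (Pi.basisFun k (Fin (r (i + d) (i + d)))).linearIndependent
    have := hb.comp _ hinj
    have hgeq : g = ⇑(Pi.basisFun k (Fin (r (i + d) (i + d)))) ∘ (fun u : Fin (r i (i + d)) =>
        (⟨iter n r i d (u : ℕ), iter_lt hstar1 hstar2 hdn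
          (by rw [hRm]; exact u.2)⟩ : Fin (r (i + d) (i + d)))) := by
      funext u
      simp [hg, Function.comp, Pi.basisFun_apply]
    rw [hgeq]
    exact this
  rw [hrange, hspan, finrank_span_eq_card hli, Fintype.card_fin]

end Main

end RankCond

theorem rank_conditions_occur (k : Type*) [Field k] (n : ℕ) (r : ℕ → ℕ → ℕ)
    (hstar1 : ∀ i j : ℕ, i < j → j ≤ n → r i j ≤ r i (j - 1) ∧ r i j ≤ r (i + 1) j)
    (hstar2 : ∀ i j : ℕ, i + 1 < j → j ≤ n →
      r i (j - 1) + r (i + 1) j ≤ r (i + 1) (j - 1) + r i j) :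
    ∃ φ : ∀ i : ℕ, (Fin (r i i) → k) →ₗ[k] (Fin (r (i + 1) (i + 1)) → k),
      ∀ i j : ℕ, i < j → j ≤ n →
        Module.finrank k (LinearMap.range (lcomp φ i (j - i))) = r i j := by
  refine ⟨RankCond.Phi n r k, ?_⟩
  intro i j hij hjn
  obtain ⟨d, rfl⟩ : ∃ d, j = i + d := ⟨j - i, by omega⟩
  have hd : i + d - i = d := by omega
  rw [hd]
  exact RankCond.rank_lcomp hstar1 hstar2 i d hjn
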